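/- Let K be a number field in which the polynomial X² + X + 1 has no root, let a ∈ K be nonzero, and let E be the elliptic curve over K with Weierstrass equation y² = x³ − 432·a². Consider the group E(K̄) of points of E over an algebraic closure K̄ of K, with the absolute Galois group Aut(K̄/K) acting on points coordinatewise. If a is a cube in K^×, then there are exactly two subgroups of E(K̄) of order 3 that are stable under the action of Aut(K̄/K); if a is not a cube in K^×, there is exactly one such subgroup. -/

import Mathlib

open WeierstrassCurve
open scoped WeierstrassCurve.Affine
open scoped Classical

namespace Stmt15

lemma fixed_mem_range {K : Type*} [Field K] [CharZero K] (x : AlgebraicClosure K)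
    (h : ∀ σ : AlgebraicClosure K ≃ₐ[K] AlgebraicClosure K, σ x = x) :
    ∃ k : K, algebraMap K (AlgebraicClosure K) k = x := by
  have hx : IsIntegral K x := Algebra.IsIntegral.isIntegral x
  by_contra hc
  push_neg at hc
  have hdeg : (minpoly K x).degree ≠ 1 := by
    intro hd
    obtain ⟨k, hk⟩ := (minpoly.degree_eq_one_iff).mp hd
    exact hc k hk
  have h1 : 1 ≤ (minpoly K x).natDegree := minpoly.natDegree_pos hx
  have h2 : 2 ≤ (minpoly K x).natDegree := by
    rcases eq_or_lt_of_le h1 with h' | h'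
    · exact absurd (by rw [Polynomial.degree_eq_natDegree (minpoly.ne_zero hx), ← h']; rfl) hdeg
    · omega
  set q := (minpoly K x).map (algebraMap K (AlgebraicClosure K)) with hqdef
  have hq0 : q ≠ 0 := Polynomial.map_ne_zero (minpoly.ne_zero hx)
  have hsep : q.Separable := ((minpoly.irreducible hx).separable).map
  have hnodup := Polynomial.nodup_roots hsep
  have hcard : (minpoly K x).natDegree = q.roots.card :=
    (Polynomial.natDegree_map _).symm.trans (IsAlgClosed.splits q).natDegree_eq_card_roots
  have hxr : x ∈ q.roots := by
    rw [Polynomial.mem_roots hq0, Polynomial.IsRoot, Polynomial.eval_map,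
      ← Polynomial.aeval_def, minpoly.aeval]
  have hex : ∃ y ∈ q.roots, y ≠ x := by
    by_contra hall
    push_neg at hall
    have hsub : q.roots.toFinset ⊆ {x} := fun y hy =>
      Finset.mem_singleton.mpr (hall y (Multiset.mem_toFinset.mp hy))
    have := Finset.card_le_card hsub
    rw [Multiset.toFinset_card_of_nodup hnodup, Finset.card_singleton] at this
    omega
  obtain ⟨y, hyr, hyx⟩ := hex
  have hyroot : Polynomial.aeval y (minpoly K x) = 0 := by
    have := (Polynomial.mem_roots hq0).mp hyr
    rwa [Polynomial.IsRoot, Polynomial.eval_map, ← Polynomial.aeval_def] at this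
  obtain ⟨σ, hσ⟩ := minpoly.exists_algEquiv_of_root (hx.isAlgebraic) hyroot
  exact hyx (σ.injective (by rw [hσ, h σ]))

lemma cube_inj {K : Type*} [Field K] (hK : ∀ x : K, x ^ 2 + x + 1 ≠ 0)
    {u v : K} (h : u ^ 3 = v ^ 3) : u = v := by
  rcases eq_or_ne v 0 with rfl | hv
  · simpa [pow_eq_zero_iff] using h
  · have h2 : (u - v) * (u ^ 2 + u * v + v ^ 2) = 0 := by linear_combination h
    rcases mul_eq_zero.mp h2 with h3 | h3
    · exact sub_eq_zero.mp h3
    · exact absurd (show (u / v) ^ 2 + (u / v) + 1 = 0 by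
        field_simp
        linear_combination h3) (hK _)

/-- The curve `y² = x³ - 432 a²`. -/
abbrev Wc {K : Type*} [Field K] (a : K) : WeierstrassCurve K :=
  { a₁ := 0, a₂ := 0, a₃ := 0, a₄ := 0, a₆ := -432 * a ^ 2 }

section Curve

variable {K : Type*} [Field K] [CharZero K] (a : K)

lemma Va₁ : ((Wc a).baseChange (AlgebraicClosure K)).a₁ = 0 := by
  simp [baseChange, Wc]

lemma Va₂ : ((Wc a).baseChange (AlgebraicClosure K)).a₂ = 0 := by
  simp [baseChange, Wc]

lemma Va₃ : ((Wc a).baseChange (AlgebraicClosure K)).a₃ = 0 := by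
  simp [baseChange, Wc]

lemma Va₄ : ((Wc a).baseChange (AlgebraicClosure K)).a₄ = 0 := by
  simp [baseChange, Wc]

lemma Va₆ : ((Wc a).baseChange (AlgebraicClosure K)).a₆ =
    -432 * (algebraMap K (AlgebraicClosure K) a) ^ 2 := by
  simp [baseChange, Wc, map_neg, map_mul, map_pow, map_ofNat]

lemma eqn_iff (x y : AlgebraicClosure K) :
    ((Wc a).baseChange (AlgebraicClosure K)).toAffine.Equation x y ↔
      y ^ 2 = x ^ 3 - 432 * (algebraMap K (AlgebraicClosure K) a) ^ 2 := by
  rw [Affine.equation_iff, Va₁, Va₂, Va₃, Va₄, Va₆]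
  constructor <;> intro h <;> linear_combination h

lemma VnegY (x y : AlgebraicClosure K) :
    ((Wc a).baseChange (AlgebraicClosure K)).toAffine.negY x y = -y := by
  rw [Affine.negY, Va₁, Va₃]
  ring

lemma some_eq_some {F : Type*} [Field F] {W : Affine F} {x₁ y₁ x₂ y₂ : F}
    (h₁ : W.Nonsingular x₁ y₁) (h₂ : W.Nonsingular x₂ y₂) (hx : x₁ = x₂) (hy : y₁ = y₂) :
    Affine.Point.some _ _ h₁ = Affine.Point.some _ _ h₂ := by subst hx; subst hy; rfl

lemma VΔ_ne (ha : a ≠ 0) : ((Wc a).baseChange (AlgebraicClosure K)).Δ ≠ 0 := by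
  have hΔ : (Wc a).Δ = -80621568 * a ^ 4 := by
    simp [Wc, Δ, b₂, b₄, b₆, b₈]
    ring
  rw [baseChange, map_Δ]
  rw [map_ne_zero_iff _ (algebraMap K (AlgebraicClosure K)).injective, hΔ]
  exact mul_ne_zero (by norm_num) (pow_ne_zero _ ha)


lemma ns_of_eqn (ha : a ≠ 0) {x y : AlgebraicClosure K}
    (h : ((Wc a).baseChange (AlgebraicClosure K)).toAffine.Equation x y) :
    ((Wc a).baseChange (AlgebraicClosure K)).toAffine.Nonsingular x y :=
  (Affine.equation_iff_nonsingular_of_Δ_ne_zero (VΔ_ne a ha)).mp h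

lemma charzero_ac : CharZero (AlgebraicClosure K) :=
  charZero_of_injective_algebraMap (algebraMap K (AlgebraicClosure K)).injective

lemma double_eq (ha : a ≠ 0) {x y : AlgebraicClosure K}
    (h : ((Wc a).baseChange (AlgebraicClosure K)).toAffine.Nonsingular x y)
    (hx : x * (x ^ 3 - 1728 * (algebraMap K (AlgebraicClosure K) a) ^ 2) = 0) :
    Affine.Point.some _ _ h + Affine.Point.some _ _ h = - Affine.Point.some _ _ h := by
  haveI := charzero_ac (K := K)
  set α := algebraMap K (AlgebraicClosure K) a with hα
  have hα0 : α ≠ 0 := by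
    rw [hα, ne_eq, map_eq_zero]; exact ha
  have heq : y ^ 2 = x ^ 3 - 432 * α ^ 2 := (eqn_iff a x y).mp h.1
  have hy0 : y ≠ 0 := by
    intro h0
    rw [h0] at heq
    apply hα0
    rcases mul_eq_zero.mp hx with h1 | h1
    · rw [h1] at heq
      have h2 : (432 : AlgebraicClosure K) * α ^ 2 = 0 := by linear_combination heq
      exact pow_eq_zero_iff two_ne_zero |>.mp
        ((mul_eq_zero.mp h2).resolve_left (by norm_num))
    · have h2 : (1296 : AlgebraicClosure K) * α ^ 2 = 0 := by linear_combination -heq - h1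
      exact pow_eq_zero_iff two_ne_zero |>.mp
        ((mul_eq_zero.mp h2).resolve_left (by norm_num))
  have hy' : y ≠ ((Wc a).baseChange (AlgebraicClosure K)).toAffine.negY x y := by
    rw [VnegY]
    intro hc
    have h2 : (2 : AlgebraicClosure K) * y = 0 := by linear_combination hc
    exact hy0 ((mul_eq_zero.mp h2).resolve_left two_ne_zero)
  rw [Affine.Point.add_self_of_Y_ne hy', Affine.Point.neg_some]
  set l := ((Wc a).baseChange (AlgebraicClosure K)).toAffine.slope x x y y with hl
  have hld : l * (2 * y) = 3 * x ^ 2 := by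
    rw [hl, Affine.slope_of_Y_ne rfl hy', Va₁, Va₂, Va₄, VnegY,
      div_mul_eq_mul_div, div_eq_iff (show y - -y ≠ 0 by
        intro hc; exact hy0 (by linear_combination (1/2 : AlgebraicClosure K) * hc))]
    ring
  have h9 : 9 * x ^ 4 = 12 * x * y ^ 2 := by
    linear_combination (-12 * x) * heq + (-3) * hx
  have hl3 : l ^ 2 = 3 * x := by
    have h4 : (l ^ 2 - 3 * x) * (4 * y ^ 2) = 0 := by
      linear_combination (l * (2 * y) + 3 * x ^ 2) * hld + h9
    rcases mul_eq_zero.mp h4 with h5 | h5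
    · linear_combination h5
    · exact absurd h5 (by simp [hy0])
  have hX : ((Wc a).baseChange (AlgebraicClosure K)).toAffine.addX x x l = x := by
    rw [Affine.addX, Va₁, Va₂]
    linear_combination hl3
  refine some_eq_some _ _ hX ?_
  rw [Affine.addY, Affine.negAddY, hX, sub_self, mul_zero, zero_add]

lemma x_rel_of_double (ha : a ≠ 0) {x y : AlgebraicClosure K}
    {h : ((Wc a).baseChange (AlgebraicClosure K)).toAffine.Nonsingular x y}
    (hd : Affine.Point.some _ _ h + Affine.Point.some _ _ h = - Affine.Point.some _ _ h) :
    x * (x ^ 3 - 1728 * (algebraMap K (AlgebraicClosure K) a) ^ 2) = 0 := by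
  haveI := charzero_ac (K := K)
  set α := algebraMap K (AlgebraicClosure K) a with hα
  have heq : y ^ 2 = x ^ 3 - 432 * α ^ 2 := (eqn_iff a x y).mp h.1
  by_cases hy' : y = ((Wc a).baseChange (AlgebraicClosure K)).toAffine.negY x y
  · exfalso
    rw [Affine.Point.add_self_of_Y_eq hy'] at hd
    exact Affine.Point.some_ne_zero h (neg_eq_zero.mp hd.symm)
  · have hy0 : y ≠ 0 := fun h0 => hy' (by rw [VnegY, h0, neg_zero])
    rw [Affine.Point.add_self_of_Y_ne hy', Affine.Point.neg_some] at hd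
    set l := ((Wc a).baseChange (AlgebraicClosure K)).toAffine.slope x x y y with hl
    have hX := (Affine.Point.some.inj hd).1
    rw [Affine.addX, Va₁, Va₂] at hX
    have hl3 : l ^ 2 = 3 * x := by linear_combination hX
    have hld : l * (2 * y) = 3 * x ^ 2 := by
      rw [hl, Affine.slope_of_Y_ne rfl hy', Va₁, Va₂, Va₄, VnegY,
        div_mul_eq_mul_div, div_eq_iff (show y - -y ≠ 0 by
          intro hc; exact hy0 (by linear_combination (1/2 : AlgebraicClosure K) * hc))]
      ring
    have h9 : 9 * x ^ 4 = 12 * x * y ^ 2 := by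
      linear_combination (-(l * (2 * y) + 3 * x ^ 2)) * hld + (4 * y ^ 2) * hl3
    linear_combination (-1/3 : AlgebraicClosure K) * h9 + (-4 * x) * heq


lemma map_point_cases {x y : AlgebraicClosure K}
    (h : ((Wc a).baseChange (AlgebraicClosure K)).toAffine.Nonsingular x y)
    (σ : AlgebraicClosure K ≃ₐ[K] AlgebraicClosure K) (hσx : σ.toAlgHom x = x) :
    Affine.Point.map (W' := Wc a) σ.toAlgHom (Affine.Point.some _ _ h) = Affine.Point.some _ _ h ∨
    Affine.Point.map (W' := Wc a) σ.toAlgHom (Affine.Point.some _ _ h) = -(Affine.Point.some _ _ h) := by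
  rw [Affine.Point.map_some]
  have hns : ((Wc a).baseChange (AlgebraicClosure K)).toAffine.Nonsingular
      (σ.toAlgHom x) (σ.toAlgHom y) :=
    (Affine.baseChange_nonsingular (Wc a) (f := σ.toAlgHom) σ.toAlgHom.injective x y).mpr h
  rcases Affine.Y_eq_of_X_eq hns.1 h.1 hσx with hy | hy
  · exact Or.inl (some_eq_some _ h hσx hy)
  · refine Or.inr ?_
    rw [Affine.Point.neg_some]
    exact some_eq_some _ _ hσx hy

lemma three_smul_of_double {G : Type*} [AddCommGroup G] {P : G} (hd : P + P = -P) :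
    (3 : ℕ) • P = 0 := by
  rw [show (3:ℕ) = 2 + 1 from rfl, add_nsmul, two_nsmul, one_nsmul, hd, neg_add_cancel]

lemma double_of_three_smul {G : Type*} [AddCommGroup G] {P : G} (h3 : (3 : ℕ) • P = 0) :
    P + P = -P := by
  have h : P + P + P = 0 := by
    rw [show (3:ℕ) = 2 + 1 from rfl, add_nsmul, two_nsmul, one_nsmul] at h3
    exact h3
  exact eq_neg_of_add_eq_zero_left h

lemma mem_zmult_classify {G : Type*} [AddCommGroup G] {P Q : G} (h3 : (3 : ℕ) • P = 0)
    (hQ : Q ∈ AddSubgroup.zmultiples P) : Q = 0 ∨ Q = P ∨ Q = -P := by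
  obtain ⟨k, hk⟩ := AddSubgroup.mem_zmultiples_iff.mp hQ
  have h3' : (3 : ℤ) • P = 0 := by
    rw [show (3:ℤ) = ((3:ℕ):ℤ) by norm_num, natCast_zsmul, h3]
  have hsplit : k • P = (k % 3) • P := by
    conv_lhs => rw [← Int.mul_ediv_add_emod k 3]
    rw [add_zsmul, mul_comm, mul_zsmul, h3', smul_zero, zero_add]
  have hk3 : k % 3 = 0 ∨ k % 3 = 1 ∨ k % 3 = 2 := by omega
  rcases hk3 with hr | hr | hr <;> rw [← hk, hsplit, hr]
  · left; exact zero_zsmul P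
  · right; left; exact one_zsmul P
  · right; right
    rw [show (2:ℤ) = 1 + 1 from rfl, add_zsmul, one_zsmul]
    exact double_of_three_smul h3

lemma subgroup_struct {G : Type*} [AddCommGroup G] {S : AddSubgroup G} (hS : Nat.card S = 3) :
    ∃ P : G, P ≠ 0 ∧ P ∈ S ∧ (3 : ℕ) • P = 0 ∧ S = AddSubgroup.zmultiples P := by
  haveI : Finite S := Nat.finite_of_card_ne_zero (by rw [hS]; norm_num)
  have hP : ∃ P ∈ S, P ≠ (0 : G) := by
    by_contra hall
    push_neg at hall
    rw [(AddSubgroup.eq_bot_iff_forall S).mpr hall, AddSubgroup.card_bot] at hS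
    norm_num at hS
  obtain ⟨P, hPS, hP0⟩ := hP
  have h3 : (3 : ℕ) • P = 0 := by
    have h : Nat.card S • (⟨P, hPS⟩ : S) = 0 := card_nsmul_eq_zero'
    rw [hS] at h
    have h' := congrArg (Subtype.val) h
    simpa using h'
  have hord : addOrderOf P = 3 := by
    have hdvd : addOrderOf P ∣ 3 := addOrderOf_dvd_of_nsmul_eq_zero h3
    rcases (Nat.prime_three.eq_one_or_self_of_dvd _ hdvd) with h | h
    · exact absurd (AddMonoid.addOrderOf_eq_one_iff.mp h) hP0
    · exact h
  refine ⟨P, hP0, hPS, h3, ?_⟩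
  exact (AddSubgroup.eq_of_le_of_card_ge (AddSubgroup.zmultiples_le_of_mem hPS)
    (by rw [hS, Nat.card_zmultiples, hord])).symm

lemma card_zmult_three {G : Type*} [AddCommGroup G] {P : G} (hP0 : P ≠ 0)
    (h3 : (3 : ℕ) • P = 0) : Nat.card (AddSubgroup.zmultiples P) = 3 := by
  rw [Nat.card_zmultiples]
  have hdvd : addOrderOf P ∣ 3 := addOrderOf_dvd_of_nsmul_eq_zero h3
  rcases (Nat.prime_three.eq_one_or_self_of_dvd _ hdvd) with h | h
  · exact absurd (AddMonoid.addOrderOf_eq_one_iff.mp h) hP0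
  · exact h

/-- If the x-coordinate comes from `K`, the subgroup is Galois-stable. -/
lemma stable_of_K_x {x y : AlgebraicClosure K}
    (h : ((Wc a).baseChange (AlgebraicClosure K)).toAffine.Nonsingular x y)
    (ξ : K) (hξ : algebraMap K (AlgebraicClosure K) ξ = x)
    (h3 : (3 : ℕ) • (Affine.Point.some _ _ h : ((Wc a).toAffine⁄(AlgebraicClosure K)).Point) = 0)
    (σ : AlgebraicClosure K ≃ₐ[K] AlgebraicClosure K) :
    ∀ Q ∈ AddSubgroup.zmultiples (Affine.Point.some _ _ h),
      Affine.Point.map (W' := Wc a) σ.toAlgHom Q ∈ AddSubgroup.zmultiples (Affine.Point.some _ _ h) := by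
  intro Q hQ
  have hσx : σ.toAlgHom x = x := by rw [← hξ]; exact σ.toAlgHom.commutes ξ
  rcases mem_zmult_classify h3 hQ with rfl | rfl | rfl
  · rw [map_zero]; exact zero_mem _
  · rcases map_point_cases a h σ hσx with he | he <;> rw [he]
    · exact AddSubgroup.mem_zmultiples _
    · exact neg_mem (AddSubgroup.mem_zmultiples _)
  · rw [map_neg]
    rcases map_point_cases a h σ hσx with he | he <;> rw [he]
    · exact neg_mem (AddSubgroup.mem_zmultiples _)
    · rw [neg_neg]; exact AddSubgroup.mem_zmultiples _

/-- Galois-stability forces the x-coordinate to be fixed. -/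
lemma x_fixed_of_stable {x y : AlgebraicClosure K}
    (h : ((Wc a).baseChange (AlgebraicClosure K)).toAffine.Nonsingular x y)
    (h3 : (3 : ℕ) • (Affine.Point.some _ _ h : ((Wc a).toAffine⁄(AlgebraicClosure K)).Point) = 0)
    (hstab : ∀ σ : AlgebraicClosure K ≃ₐ[K] AlgebraicClosure K,
      ∀ Q ∈ AddSubgroup.zmultiples (Affine.Point.some _ _ h),
        Affine.Point.map (W' := Wc a) σ.toAlgHom Q ∈ AddSubgroup.zmultiples (Affine.Point.some _ _ h))
    (σ : AlgebraicClosure K ≃ₐ[K] AlgebraicClosure K) : σ x = x := by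
  have hmem := hstab σ (Affine.Point.some _ _ h) (AddSubgroup.mem_zmultiples _)
  rw [Affine.Point.map_some] at hmem
  rcases mem_zmult_classify h3 hmem with he | he | he
  · exact absurd he (Affine.Point.some_ne_zero _)
  · exact (Affine.Point.some.inj he).1
  · rw [Affine.Point.neg_some] at he
    exact (Affine.Point.some.inj he).1

lemma zmult_neg_eq {G : Type*} [AddCommGroup G] (P : G) :
    AddSubgroup.zmultiples (-P) = AddSubgroup.zmultiples P := by
  refine le_antisymm (AddSubgroup.zmultiples_le_of_mem
      (neg_mem (AddSubgroup.mem_zmultiples _))) (AddSubgroup.zmultiples_le_of_mem ?_)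
  simpa using neg_mem (AddSubgroup.mem_zmultiples (-P))

end Curve

end Stmt15


/-- Let `K` be a number field in which `X² + X + 1` has no root,
`a ∈ K` nonzero, and `E : y² = x³ − 432a²`. If `a` is a cube in `K`, then `E(K̄)`
has exactly two Galois-stable subgroups of order 3; otherwise exactly one. -/
theorem stmt_15 (K : Type*) [Field K] [NumberField K]
    (hK : ∀ x : K, x ^ 2 + x + 1 ≠ 0) (a : K) (ha : a ≠ 0)
    (W : WeierstrassCurve K)
    (hW : W = { a₁ := 0, a₂ := 0, a₃ := 0, a₄ := 0, a₆ := -432 * a ^ 2 }) :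
    ((∃ c : K, c ^ 3 = a) →
      {S : AddSubgroup (W.toAffine⁄(AlgebraicClosure K)).Point | Nat.card S = 3 ∧
        ∀ σ : AlgebraicClosure K ≃ₐ[K] AlgebraicClosure K, ∀ P ∈ S,
          WeierstrassCurve.Affine.Point.map (W' := W) σ.toAlgHom P ∈ S}.ncard = 2) ∧
    ((¬ ∃ c : K, c ^ 3 = a) →
      {S : AddSubgroup (W.toAffine⁄(AlgebraicClosure K)).Point | Nat.card S = 3 ∧
        ∀ σ : AlgebraicClosure K ≃ₐ[K] AlgebraicClosure K, ∀ P ∈ S,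
          WeierstrassCurve.Affine.Point.map (W' := W) σ.toAlgHom P ∈ S}.ncard = 1) := by
  subst hW
  haveI : CharZero (AlgebraicClosure K) := Stmt15.charzero_ac (K := K)
  obtain ⟨y₀, hy₀⟩ := IsAlgClosed.exists_pow_nat_eq
    (-432 * (algebraMap K (AlgebraicClosure K) a) ^ 2) (n := 2) (by norm_num)
  have h₀ : ((Stmt15.Wc a).baseChange (AlgebraicClosure K)).toAffine.Nonsingular 0 y₀ :=
    Stmt15.ns_of_eqn a ha ((Stmt15.eqn_iff a 0 y₀).mpr (by rw [hy₀]; ring))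
  set P₀ : ((Stmt15.Wc a).toAffine⁄(AlgebraicClosure K)).Point := Affine.Point.some _ _ h₀ with hP₀
  have h3P₀ : (3 : ℕ) • P₀ = 0 :=
    Stmt15.three_smul_of_double (Stmt15.double_eq a ha h₀ (by ring))
  have hP₀0 : P₀ ≠ 0 := Affine.Point.some_ne_zero h₀
  set S₀ := AddSubgroup.zmultiples P₀ with hS₀def
  have hcard₀ : Nat.card S₀ = 3 := Stmt15.card_zmult_three hP₀0 h3P₀
  have hstab₀ := fun σ => Stmt15.stable_of_K_x a h₀ 0 (by rw [map_zero]) h3P₀ σ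
  constructor
  · rintro ⟨c, hc⟩
    have hc0 : c ≠ 0 := by rintro rfl; rw [← hc] at ha; simp at ha
    set γ := algebraMap K (AlgebraicClosure K) c with hγ
    have hγ0 : γ ≠ 0 := by rw [hγ, ne_eq, map_eq_zero]; exact hc0
    have hγa : γ ^ 3 = algebraMap K (AlgebraicClosure K) a := by rw [hγ, ← map_pow, hc]
    have h₁ : ((Stmt15.Wc a).baseChange (AlgebraicClosure K)).toAffine.Nonsingular
        (12 * γ ^ 2) (36 * γ ^ 3) :=
      Stmt15.ns_of_eqn a ha ((Stmt15.eqn_iff a _ _).mpr (by rw [← hγa]; ring))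
    set P₁ : ((Stmt15.Wc a).toAffine⁄(AlgebraicClosure K)).Point := Affine.Point.some _ _ h₁ with hP₁
    have h3P₁ : (3 : ℕ) • P₁ = 0 :=
      Stmt15.three_smul_of_double (Stmt15.double_eq a ha h₁ (by rw [← hγa]; ring))
    have hP₁0 : P₁ ≠ 0 := Affine.Point.some_ne_zero h₁
    set S₁ := AddSubgroup.zmultiples P₁ with hS₁def
    have hcard₁ : Nat.card S₁ = 3 := Stmt15.card_zmult_three hP₁0 h3P₁
    have hstab₁ := fun σ => Stmt15.stable_of_K_x a h₁ (12 * c ^ 2)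
      (by rw [map_mul, map_pow, map_ofNat, hγ]) h3P₁ σ
    have hne : S₀ ≠ S₁ := by
      intro he
      have hm : P₁ ∈ S₀ := by rw [he]; exact AddSubgroup.mem_zmultiples P₁
      have h12 : (12 : AlgebraicClosure K) * γ ^ 2 ≠ 0 :=
        mul_ne_zero (by norm_num) (pow_ne_zero _ hγ0)
      rcases Stmt15.mem_zmult_classify h3P₀ hm with h' | h' | h'
      · exact hP₁0 h'
      · exact h12 (Affine.Point.some.inj h').1
      · rw [hP₀, Affine.Point.neg_some] at h'
        exact h12 (Affine.Point.some.inj h').1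
    have hset : {S : AddSubgroup ((Stmt15.Wc a).toAffine⁄(AlgebraicClosure K)).Point | Nat.card S = 3 ∧
        ∀ σ : AlgebraicClosure K ≃ₐ[K] AlgebraicClosure K, ∀ P ∈ S,
          WeierstrassCurve.Affine.Point.map (W' := Stmt15.Wc a) σ.toAlgHom P ∈ S} = {S₀, S₁} := by
      ext S
      simp only [Set.mem_setOf_eq, Set.mem_insert_iff, Set.mem_singleton_iff]
      constructor
      · rintro ⟨hScard, hSstab⟩
        obtain ⟨P, hPne, hPS, h3P, rfl⟩ := Stmt15.subgroup_struct hScard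
        rcases P with _ | @⟨x, y, hxy⟩
        · exact absurd rfl hPne
        · have hxrel := Stmt15.x_rel_of_double a ha (Stmt15.double_of_three_smul h3P)
          have hfix : ∀ σ : AlgebraicClosure K ≃ₐ[K] AlgebraicClosure K, σ x = x :=
            Stmt15.x_fixed_of_stable a hxy h3P hSstab
          obtain ⟨ξ, hξ⟩ := Stmt15.fixed_mem_range x hfix
          have hKrel : ξ * (ξ ^ 3 - 1728 * a ^ 2) = 0 := by
            apply (algebraMap K (AlgebraicClosure K)).injective
            rw [map_zero, map_mul, map_sub, map_pow, map_mul, map_pow, map_ofNat, hξ]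
            exact hxrel
          rcases mul_eq_zero.mp hKrel with hξ0 | hξ3
          · left
            have hx0 : x = 0 := by rw [← hξ, hξ0, map_zero]
            rcases Affine.Y_eq_of_X_eq hxy.1 h₀.1 hx0 with hy | hy
            · rw [hS₀def, hP₀, Stmt15.some_eq_some hxy h₀ hx0 hy]
            · have heq : Affine.Point.some _ _ hxy = -P₀ := by
                rw [hP₀, Affine.Point.neg_some]
                exact Stmt15.some_eq_some _ _ hx0 hy
              rw [heq, hS₀def, Stmt15.zmult_neg_eq]
          · right
            have hξcube : ξ ^ 3 = (12 * c ^ 2) ^ 3 := by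
              linear_combination hξ3 + (-1728 * (a + c ^ 3)) * hc
            have hξval : ξ = 12 * c ^ 2 := Stmt15.cube_inj hK hξcube
            have hx1 : x = 12 * γ ^ 2 := by
              rw [← hξ, hξval, map_mul, map_pow, map_ofNat, hγ]
            rcases Affine.Y_eq_of_X_eq hxy.1 h₁.1 hx1 with hy | hy
            · rw [hS₁def, hP₁, Stmt15.some_eq_some hxy h₁ hx1 hy]
            · have heq : Affine.Point.some _ _ hxy = -P₁ := by
                rw [hP₁, Affine.Point.neg_some]
                exact Stmt15.some_eq_some _ _ hx1 hy
              rw [heq, hS₁def, Stmt15.zmult_neg_eq]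
      · rintro (rfl | rfl)
        · exact ⟨hcard₀, hstab₀⟩
        · exact ⟨hcard₁, hstab₁⟩
    rw [hset]
    exact Set.ncard_pair hne
  · intro hcube
    have hset : {S : AddSubgroup ((Stmt15.Wc a).toAffine⁄(AlgebraicClosure K)).Point | Nat.card S = 3 ∧
        ∀ σ : AlgebraicClosure K ≃ₐ[K] AlgebraicClosure K, ∀ P ∈ S,
          WeierstrassCurve.Affine.Point.map (W' := Stmt15.Wc a) σ.toAlgHom P ∈ S} = {S₀} := by
      ext S
      simp only [Set.mem_setOf_eq, Set.mem_singleton_iff]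
      constructor
      · rintro ⟨hScard, hSstab⟩
        obtain ⟨P, hPne, hPS, h3P, rfl⟩ := Stmt15.subgroup_struct hScard
        rcases P with _ | @⟨x, y, hxy⟩
        · exact absurd rfl hPne
        · have hxrel := Stmt15.x_rel_of_double a ha (Stmt15.double_of_three_smul h3P)
          have hfix : ∀ σ : AlgebraicClosure K ≃ₐ[K] AlgebraicClosure K, σ x = x :=
            Stmt15.x_fixed_of_stable a hxy h3P hSstab
          obtain ⟨ξ, hξ⟩ := Stmt15.fixed_mem_range x hfix
          have hKrel : ξ * (ξ ^ 3 - 1728 * a ^ 2) = 0 := by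
            apply (algebraMap K (AlgebraicClosure K)).injective
            rw [map_zero, map_mul, map_sub, map_pow, map_mul, map_pow, map_ofNat, hξ]
            exact hxrel
          rcases mul_eq_zero.mp hKrel with hξ0 | hξ3
          · have hx0 : x = 0 := by rw [← hξ, hξ0, map_zero]
            rcases Affine.Y_eq_of_X_eq hxy.1 h₀.1 hx0 with hy | hy
            · rw [hS₀def, hP₀, Stmt15.some_eq_some hxy h₀ hx0 hy]
            · have heq : Affine.Point.some _ _ hxy = -P₀ := by
                rw [hP₀, Affine.Point.neg_some]
                exact Stmt15.some_eq_some _ _ hx0 hy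
              rw [heq, hS₀def, Stmt15.zmult_neg_eq]
          · exact absurd ⟨ξ ^ 2 / (144 * a), by
              field_simp
              linear_combination (ξ ^ 3 + 1728 * a ^ 2) * hξ3⟩ hcube
      · rintro rfl
        exact ⟨hcard₀, hstab₀⟩
    rw [hset]
    exact Set.ncard_singleton S₀
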